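/- Let T be a commutative ring, and let C be the category of T-modules finitely generated over a complete DVR O. Define a module N of finite length to be of type ω if on every Jordan–Hölder constituent the relation T_v² = T_{v,v}(1+q_v)² holds for all v in the index set, and a general N ∈ C to be of type ω if all graded pieces λⁿN/λⁿ⁺¹N of its λ-adic filtration are of type ω. Then the full subcategory of type-ω modules is a Serre subcategory of C: it is closed under submodules, quotients, and extensions. -/

import Mathlib

/-- A `T`-module `N` (finitely generated over the DVR `O` with uniformizer `lam`)
is *of type ω* if, for every place `v`, the Hecke operator
`t_v = T_v² − T_{v,v}(1+q_v)²` acts nilpotently on every graded piece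
`λⁿN/λⁿ⁺¹N` of the `λ`-adic filtration; equivalently (for finite length graded
pieces, by Jordan–Hölder) the relation `T_v² = T_{v,v}(1+q_v)²` holds on every
Jordan–Hölder constituent.  Concretely: for all `v` and `n` there is `m` with
`t_v^m • N ⊆ λⁿ • N`. -/
def TypeOmega {O T : Type*} [CommRing O] [CommRing T] [Algebra O T]
    {V : Type*} (Tv Tvv q : V → T) (lam : O)
    (N : Type*) [AddCommGroup N] [Module T N] [Module O N] [IsScalarTower O T N] : Prop :=
  ∀ v : V, ∀ n : ℕ, ∃ m : ℕ, ∀ x : N,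
    ∃ y : N, ((Tv v) ^ 2 - (Tvv v) * (1 + q v) ^ 2) ^ m • x = lam ^ n • y


private lemma mem_span_singleton_smul' {O : Type*} [CommRing O] {N : Type*} [AddCommGroup N]
    [Module O N] (r : O) (S : Submodule O N) (x : N) :
    x ∈ Ideal.span {r} • S ↔ ∃ y ∈ S, x = r • y := by
  constructor
  · intro h
    refine Submodule.smul_induction_on h ?_ ?_
    · rintro a ha z hz
      obtain ⟨c, rfl⟩ := Ideal.mem_span_singleton'.mp ha
      exact ⟨c • z, S.smul_mem c hz, by rw [mul_comm, mul_smul]⟩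
    · rintro x y ⟨x', hx', rfl⟩ ⟨y', hy', rfl⟩
      exact ⟨x' + y', S.add_mem hx' hy', by rw [smul_add]⟩
  · rintro ⟨y, hy, rfl⟩
    exact Submodule.smul_mem_smul (Ideal.mem_span_singleton_self r) hy


private lemma bounded_torsion {O : Type*} [CommRing O] [IsDomain O] [IsDiscreteValuationRing O]
    {lam : O} (hlam : Irreducible lam) (M : Type*) [AddCommGroup M] [Module O M]
    [Module.Finite O M] : ∃ c : ℕ, ∀ z ∈ Submodule.torsion O M, lam ^ c • z = 0 := by
  obtain ⟨s, hs⟩ := IsNoetherian.noetherian (Submodule.torsion O M)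
  have key : ∀ t : M, ∃ k : ℕ, t ∈ Submodule.torsion O M → lam ^ k • t = 0 := by
    intro t
    by_cases ht : t ∈ Submodule.torsion O M
    · obtain ⟨a, ha⟩ := (Submodule.mem_torsion_iff (R := O) t).mp ht
      have ha0 : (a : O) ≠ 0 := nonZeroDivisors.coe_ne_zero a
      obtain ⟨k, u, hu⟩ := IsDiscreteValuationRing.associated_pow_irreducible ha0 hlam
      have ha' : (a : O) • t = 0 := ha
      exact ⟨k, fun _ => by rw [← hu, mul_comm, mul_smul, ha', smul_zero]⟩
    · exact ⟨0, fun h => absurd h ht⟩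
  choose k hk using key
  refine ⟨s.sup k, fun z hz => ?_⟩
  rw [← hs] at hz
  induction hz using Submodule.span_induction with
  | mem t hts =>
    have htt : t ∈ Submodule.torsion O M := by
      rw [← hs]; exact Submodule.subset_span hts
    have hle : k t ≤ s.sup k := Finset.le_sup hts
    rw [← Nat.sub_add_cancel hle, pow_add, mul_smul, hk t htt, smul_zero]
  | zero => exact smul_zero _
  | add a b _ _ ha hb => rw [smul_add, ha, hb, add_zero]
  | smul a z _ hz' => rw [smul_comm, hz', smul_zero]

/-- The full subcategory of type-ω modules (inside the category
of `T`-modules finitely generated over the complete DVR `O`) is a Serre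
subcategory: for every short exact sequence `0 → N' → N → N'' → 0`, `N` is of
type ω if and only if both `N'` and `N''` are; in particular the type-ω modules
are closed under submodules, quotients, and extensions. -/
theorem stmt14 {O T : Type*} [CommRing O] [IsDomain O] [IsDiscreteValuationRing O]
    [CommRing T] [Algebra O T]
    {V : Type*} (Tv Tvv q : V → T) (lam : O) (hlam : Irreducible lam)
    {N' N N'' : Type*}
    [AddCommGroup N'] [Module T N'] [Module O N'] [IsScalarTower O T N']
    [AddCommGroup N] [Module T N] [Module O N] [IsScalarTower O T N]
    [AddCommGroup N''] [Module T N''] [Module O N''] [IsScalarTower O T N'']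
    [Module.Finite O N'] [Module.Finite O N] [Module.Finite O N'']
    (f : N' →ₗ[T] N) (g : N →ₗ[T] N'')
    (hf : Function.Injective f) (hg : Function.Surjective g)
    (hex : Function.Exact ⇑f ⇑g) :
    (TypeOmega Tv Tvv q lam N →
        TypeOmega Tv Tvv q lam N' ∧ TypeOmega Tv Tvv q lam N'') ∧
    (TypeOmega Tv Tvv q lam N' → TypeOmega Tv Tvv q lam N'' →
        TypeOmega Tv Tvv q lam N) := by

  set t : V → T := fun v => (Tv v) ^ 2 - (Tvv v) * (1 + q v) ^ 2 with ht
  have comm : ∀ (a : T) (c : O) (z : N), a • (c • z) = c • (a • z) := by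
    intro a c z
    rw [← algebraMap_smul T c z, ← algebraMap_smul T c (a • z), smul_smul, smul_smul, mul_comm]
  constructor
  · intro hN
    constructor
    · -- submodules, via bounded torsion of the quotient
      intro v n
      set P : Submodule O N := LinearMap.range (f.restrictScalars O) with hP
      obtain ⟨c, hc⟩ := bounded_torsion hlam (N ⧸ P)
      obtain ⟨m, hm⟩ := hN v (n + c)
      refine ⟨m, fun x' => ?_⟩
      obtain ⟨y, hy⟩ := hm (f x')
      have hmem : lam ^ (n + c) • y ∈ P := by
        rw [← hy]
        exact ⟨(t v) ^ m • x', by rw [LinearMap.coe_restrictScalars, map_smul]⟩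
      have htor : P.mkQ y ∈ Submodule.torsion O (N ⧸ P) := by
        rw [Submodule.mem_torsion_iff]
        refine ⟨⟨lam ^ (n + c), mem_nonZeroDivisors_of_ne_zero (pow_ne_zero _ hlam.ne_zero)⟩, ?_⟩
        show lam ^ (n + c) • P.mkQ y = 0
        rw [← map_smul, Submodule.mkQ_apply, Submodule.Quotient.mk_eq_zero]
        exact hmem
      have hcy : lam ^ c • y ∈ P := by
        have := hc _ htor
        rw [← map_smul, Submodule.mkQ_apply, Submodule.Quotient.mk_eq_zero] at this
        exact this
      obtain ⟨y₀, hy₀⟩ := hcy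
      refine ⟨y₀, hf ?_⟩
      rw [map_smul, hy, LinearMap.map_smul_of_tower, ← LinearMap.coe_restrictScalars O f, hy₀,
        pow_add, mul_smul]
    · -- quotients
      intro v n
      obtain ⟨m, hm⟩ := hN v n
      refine ⟨m, fun x'' => ?_⟩
      obtain ⟨x, rfl⟩ := hg x''
      obtain ⟨y, hy⟩ := hm x
      exact ⟨g y, by rw [← map_smul, hy, LinearMap.map_smul_of_tower]⟩
  · -- extensions
    intro hN' hN'' v n
    obtain ⟨m'', hm''⟩ := hN'' v n
    obtain ⟨m', hm'⟩ := hN' v n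
    refine ⟨m' + m'', fun x => ?_⟩
    obtain ⟨y'', hy''⟩ := hm'' (g x)
    obtain ⟨y, hy⟩ := hg y''
    have hker : g ((t v) ^ m'' • x - lam ^ n • y) = 0 := by
      rw [map_sub, map_smul, hy'', LinearMap.map_smul_of_tower, hy, sub_self]
    obtain ⟨x', hx'⟩ := (hex _).mp hker
    obtain ⟨z', hz'⟩ := hm' x'
    refine ⟨(t v) ^ m' • y + f z', ?_⟩
    have hx : (t v) ^ m'' • x = lam ^ n • y + f x' := by
      rw [hx']; abel
    calc (t v) ^ (m' + m'') • x = (t v) ^ m' • ((t v) ^ m'' • x) := by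
          rw [pow_add, mul_smul]
      _ = (t v) ^ m' • (lam ^ n • y + f x') := by rw [hx]
      _ = lam ^ n • ((t v) ^ m' • y) + f ((t v) ^ m' • x') := by
          rw [smul_add, comm, map_smul]
      _ = lam ^ n • ((t v) ^ m' • y) + f (lam ^ n • z') := by rw [hz']
      _ = lam ^ n • ((t v) ^ m' • y + f z') := by
          rw [LinearMap.map_smul_of_tower, smul_add]
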